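/- In the slice partition of the positive roots of type A_n determined by a quiver Q' (built on the linear quiver Q_k), every positive root belongs to exactly one slice T_z, and the partition R^+ = ∪_z T_z is directed: within a slice all pairwise Ext^1 groups between the corresponding indecomposables vanish, and between an earlier slice and a later slice, Ext^1 in one direction and Hom in the other both vanish. -/
import Mathlib


attribute [local instance] Classical.propDecidable

/-- Position of the `m`-th vertex (0-based) of the slice `S_z` determined by the quiver
orientation `ε` (`ε m = true`: edge `m` right-oriented; `false`: left-oriented), as a
positive root `(i, j) ↔ α_i + ... + α_j` of `A_n`.  The slice starts at `(z, z)`. -/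
def slicePos (ε : ℕ → Bool) (z : ℕ) : ℕ → ℤ × ℤ
  | 0 => ((z : ℤ), (z : ℤ))
  | m + 1 =>
    let p := slicePos ε z m
    if ε (m + 1) then (p.1, p.2 + 1) else (p.1 - 1, p.2)

/-- The `m`-th vertex of `S_z` is a genuine positive root, i.e. belongs to
`T_z = S_z ∩ A(Q_k)`. -/
def inRange (n : ℕ) (ε : ℕ → Bool) (z m : ℕ) : Prop :=
  1 ≤ (slicePos ε z m).1 ∧ (slicePos ε z m).2 ≤ (n : ℤ)

def Lc (ε : ℕ → Bool) : ℕ → ℤ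
  | 0 => 0
  | m + 1 => Lc ε m + (if ε (m + 1) then 0 else 1)

def Rc (ε : ℕ → Bool) : ℕ → ℤ
  | 0 => 0
  | m + 1 => Rc ε m + (if ε (m + 1) then 1 else 0)

lemma slicePos_eq (ε : ℕ → Bool) (z : ℕ) : ∀ m, slicePos ε z m = ((z : ℤ) - Lc ε m, (z : ℤ) + Rc ε m)
  | 0 => by simp [slicePos, Lc, Rc]
  | m + 1 => by
    rw [slicePos, slicePos_eq ε z m]
    by_cases h : ε (m + 1) <;> simp [Lc, Rc, h] <;> ring_nf

lemma Lc_nonneg (ε : ℕ → Bool) : ∀ m, 0 ≤ Lc ε m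
  | 0 => le_refl 0
  | m + 1 => by
    have := Lc_nonneg ε m
    rw [Lc]; split <;> omega

lemma Rc_nonneg (ε : ℕ → Bool) : ∀ m, 0 ≤ Rc ε m
  | 0 => le_refl 0
  | m + 1 => by
    have := Rc_nonneg ε m
    rw [Rc]; split <;> omega

lemma Lc_add_Rc (ε : ℕ → Bool) : ∀ m, Lc ε m + Rc ε m = m
  | 0 => by simp [Lc, Rc]
  | m + 1 => by
    have := Lc_add_Rc ε m
    rw [Lc, Rc]; split <;> push_cast <;> omega

lemma Lc_mono (ε : ℕ → Bool) {m m' : ℕ} (h : m ≤ m') : Lc ε m ≤ Lc ε m' := by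
  induction m' with
  | zero => simp_all
  | succ k ih =>
    rcases Nat.lt_or_ge m (k+1) with h' | h'
    · have := ih (by omega)
      rw [Lc]; split <;> omega
    · have : m = k + 1 := by omega
      subst this; exact le_refl _

lemma Rc_mono (ε : ℕ → Bool) {m m' : ℕ} (h : m ≤ m') : Rc ε m ≤ Rc ε m' := by
  induction m' with
  | zero => simp_all
  | succ k ih =>
    rcases Nat.lt_or_ge m (k+1) with h' | h'
    · have := ih (by omega)
      rw [Rc]; split <;> omega
    · have : m = k + 1 := by omega
      subst this; exact le_refl _

/-- The slice partition of the positive roots of type `A_n` determined by a quiver `Q'`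
(built on the linear quiver `Q_k` with arrows `i ← i+1`) is a partition into slices
`T_1, ..., T_n`, and it is directed in the sense of Definition 4.2.

Here `HomNe α β` (resp. `ExtNe α β`) stands for `Hom(X_α, X_β) ≠ 0` (resp.
`Ext^1(X_α, X_β) ≠ 0`) for the interval indecomposables `X_{(i,j)} = M[i,j]` of the
linear quiver `Q_k`; these relations are characterized combinatorially by the hypotheses
`hHom` and `hExt`.  The conclusions: every positive root lies in exactly one slice;
within a slice all `Ext^1`-groups vanish; and for slices `z < z'`, `Ext^1` from the
earlier to the later slice and `Hom` from the later to the earlier slice both vanish. -/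
theorem slice_partition_directed
    (n : ℕ) (hn : 1 ≤ n) (ε : ℕ → Bool)
    (HomNe ExtNe : ℤ × ℤ → ℤ × ℤ → Prop)
    (hHom : ∀ a b c d : ℤ, HomNe (a, b) (c, d) ↔ a ≤ c ∧ c ≤ b ∧ b ≤ d)
    (hExt : ∀ a b c d : ℤ, ExtNe (a, b) (c, d) ↔
      2 ≤ a ∧ c ≤ a - 1 ∧ a - 1 ≤ d ∧ d ≤ b - 1) :
    -- every positive root belongs to exactly one slice
    (∀ i j : ℤ, 1 ≤ i → i ≤ j → j ≤ (n : ℤ) →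
      ∃! z, 1 ≤ z ∧ z ≤ n ∧ ∃ m, m < n ∧ inRange n ε z m ∧ slicePos ε z m = (i, j)) ∧
    -- (i) within one slice, all Ext¹ groups vanish
    (∀ z m m', 1 ≤ z → z ≤ n → m < n → m' < n → inRange n ε z m → inRange n ε z m' →
      ¬ ExtNe (slicePos ε z m) (slicePos ε z m')) ∧
    -- (ii) between an earlier slice and a later one, Ext¹ in one direction and Hom in
    -- the other both vanish
    (∀ z z' m m', 1 ≤ z → z < z' → z' ≤ n → m < n → m' < n →
      inRange n ε z m → inRange n ε z' m' →
      ¬ ExtNe (slicePos ε z m) (slicePos ε z' m') ∧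
      ¬ HomNe (slicePos ε z' m') (slicePos ε z m)) := by
  refine ⟨?_, ?_, ?_⟩
  · intro i j hi hij hjn
    set m : ℕ := (j - i).toNat with hm
    have hmz : (m : ℤ) = j - i := Int.toNat_of_nonneg (by omega)
    have hL := Lc_nonneg ε m
    have hR := Rc_nonneg ε m
    have hLR := Lc_add_Rc ε m
    set z : ℕ := (i + Lc ε m).toNat with hz
    have hzz : (z : ℤ) = i + Lc ε m := Int.toNat_of_nonneg (by omega)
    have hsp : slicePos ε z m = (i, j) := by
      rw [slicePos_eq, hzz, Prod.mk.injEq]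
      constructor <;> [skip; skip] <;> omega
    refine ⟨z, ⟨?_, ?_, m, ?_, ?_, hsp⟩, ?_⟩
    · omega
    · omega
    · omega
    · rw [inRange, hsp]; exact ⟨hi, hjn⟩
    · rintro z' ⟨hz1, hz2, m', hm', hir', hsp'⟩
      rw [slicePos_eq, Prod.mk.injEq] at hsp'
      have hLR' := Lc_add_Rc ε m'
      have hmm' : m' = m := by omega
      subst hmm'
      omega
  · intro z m m' hz1 hz2 hm hm' hir hir' h
    rw [slicePos_eq, slicePos_eq, hExt] at h
    obtain ⟨h1, h2, h3, h4⟩ := h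
    rcases Nat.le_total m m' with hle | hle
    · have := Rc_mono ε hle; omega
    · have := Lc_mono ε hle; omega
  · intro z z' m m' hz1 hzz' hz'n hm hm' hir hir'
    constructor
    · intro h
      rw [slicePos_eq, slicePos_eq, hExt] at h
      obtain ⟨h1, h2, h3, h4⟩ := h
      rcases Nat.le_total m m' with hle | hle
      · have := Rc_mono ε hle; omega
      · have := Lc_mono ε hle; omega
    · intro h
      rw [slicePos_eq, slicePos_eq, hHom] at h
      obtain ⟨h1, h2, h3⟩ := h
      rcases Nat.le_total m m' with hle | hle
      · have := Rc_mono ε hle; omega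
      · have := Lc_mono ε hle; omega
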